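/- arXiv:1505.00036 — 2 statements merged into one kernel-verified Lean document; each statement's English description precedes it below -/
import Mathlib

section
/- Let v be a linear classifier on [0,1]^n with weights w and threshold q, and suppose w_i > w_j > 0. If x ∈ Piv_j(b) \ Piv_i(b) for some b ∈ [0,1] and f_ij(x) ∉ Piv_i(b), then x_i ≥ b > x_j. -/
open MeasureTheory

/-- The linear classifier on ℝ^n with weights w and threshold q. -/
noncomputable def linClass {n : ℕ} (w : Fin n → ℝ) (q : ℝ) (x : Fin n → ℝ) : ℝ :=
  if q ≤ ∑ k, w k * x k then 1 else 0

/-- The unit cube [0,1]^n. -/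
def unitCube (n : ℕ) : Set (Fin n → ℝ) := Set.univ.pi fun _ => Set.Icc 0 1

/-- Piv_i(b): points of the cube that are losing but become winning when
coordinate i is set to b. -/
noncomputable def pivSet {n : ℕ} (w : Fin n → ℝ) (q : ℝ) (i : Fin n) (b : ℝ) :
    Set (Fin n → ℝ) :=
  {x | x ∈ unitCube n ∧ linClass w q x = 0 ∧
    linClass w q (Function.update x i b) = 1}

/-- The map f_ij swapping coordinates i and j. -/
def swapCoords {n : ℕ} (i j : Fin n) (x : Fin n → ℝ) : Fin n → ℝ :=
  x ∘ Equiv.swap i j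

lemma sum_mul_update {n : ℕ} (w x : Fin n → ℝ) (i : Fin n) (b : ℝ) :
    ∑ k, w k * Function.update x i b k = (∑ k, w k * x k) + w i * (b - x i) := by
  have h : ∀ k, w k * Function.update x i b k
      = Function.update (fun k => w k * x k) i (w i * b) k := by
    intro k
    rcases eq_or_ne k i with rfl | h
    · simp
    · simp [Function.update_of_ne h]
  simp_rw [h]
  rw [Finset.sum_update_of_mem (Finset.mem_univ i), Finset.sdiff_singleton_eq_erase,
    ← Finset.sum_erase_add Finset.univ (fun k => w k * x k) (Finset.mem_univ i)]
  ring

lemma linClass_eq_zero_iff {n : ℕ} (w : Fin n → ℝ) (q : ℝ) (x : Fin n → ℝ) :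
    linClass w q x = 0 ↔ ∑ k, w k * x k < q := by
  unfold linClass
  split_ifs with h
  · constructor
    · intro h1; norm_num at h1
    · intro h2; linarith
  · simpa using not_le.mp h

lemma linClass_eq_one_iff {n : ℕ} (w : Fin n → ℝ) (q : ℝ) (x : Fin n → ℝ) :
    linClass w q x = 1 ↔ q ≤ ∑ k, w k * x k := by
  unfold linClass
  split_ifs with h
  · simpa using h
  · constructor
    · intro h1; norm_num at h1
    · intro h2; exact absurd h2 h

lemma swapCoords_eq_update {n : ℕ} (i j : Fin n) (hij : i ≠ j) (x : Fin n → ℝ) :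
    swapCoords i j x = Function.update (Function.update x i (x j)) j (x i) := by
  funext k
  rcases eq_or_ne k i with rfl | hki
  · simp [swapCoords, Function.update_of_ne hij, Equiv.swap_apply_left]
  · rcases eq_or_ne k j with rfl | hkj
    · simp [swapCoords, Equiv.swap_apply_right]
    · simp [swapCoords, Equiv.swap_apply_of_ne_of_ne hki hkj,
        Function.update_of_ne hkj, Function.update_of_ne hki]

/-- If w_i > w_j > 0, x ∈ Piv_j(b) \ Piv_i(b) and
f_ij(x) ∉ Piv_i(b), then x_i ≥ b > x_j. -/
theorem swap_not_piv_implies_sandwich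
    {n : ℕ} (hn : 1 ≤ n) (w : Fin n → ℝ) (q : ℝ) (hw : ∀ k, w k ≠ 0)
    (i j : Fin n) (hij : w j < w i) (hj : 0 < w j)
    (b : ℝ) (hb : b ∈ Set.Icc (0 : ℝ) 1)
    (x : Fin n → ℝ) (hx : x ∈ pivSet w q j b) (hx' : x ∉ pivSet w q i b)
    (hf : swapCoords i j x ∉ pivSet w q i b) :
    b ≤ x i ∧ x j < b := by
  have hne : i ≠ j := by rintro rfl; exact lt_irrefl _ hij
  obtain ⟨hxc, hx0, hx1⟩ := hx
  rw [linClass_eq_zero_iff] at hx0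
  rw [linClass_eq_one_iff, sum_mul_update] at hx1
  -- x j < b
  have hxj : x j < b := by
    by_contra h
    push_neg at h
    nlinarith [mul_nonpos_of_nonneg_of_nonpos hj.le (by linarith : b - x j ≤ 0)]
  refine ⟨?_, hxj⟩
  by_contra h
  push_neg at h   -- h : x i < b
  -- from hx' : x not in Piv_i(b), so the update at i is not winning
  have hx'1 : ∑ k, w k * x k + w i * (b - x i) < q := by
    by_contra h2
    push_neg at h2
    exact hx' ⟨hxc, (linClass_eq_zero_iff w q x).mpr hx0,
      by rw [linClass_eq_one_iff, sum_mul_update]; exact h2⟩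
  -- x j < x i
  have hji : x j < x i := by nlinarith
  -- swap coordinates: show it IS in Piv_i(b), contradiction
  apply hf
  have hcube : swapCoords i j x ∈ unitCube n := by
    intro k _
    exact hxc (Equiv.swap i j k) (Set.mem_univ _)
  have hS : ∑ k, w k * swapCoords i j x k
      = (∑ k, w k * x k) + w i * (x j - x i) + w j * (x i - x j) := by
    rw [swapCoords_eq_update i j hne, sum_mul_update, sum_mul_update,
      Function.update_of_ne (Ne.symm hne)]
  refine ⟨hcube, ?_, ?_⟩
  · rw [linClass_eq_zero_iff, hS]
    nlinarith
  · rw [linClass_eq_one_iff, sum_mul_update, hS]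
    have : swapCoords i j x i = x j := by
      rw [swapCoords_eq_update i j hne]
      simp [Function.update_of_ne hne]
    rw [this]
    nlinarith
end

section
/- Let v be a linear classifier on [0,1]^n with weights w and threshold q. For every feature i: Vol(Piv_i) = Vol(APiv_i), and the influence of i satisfies χ_i = 2 · Vol(Piv_i). -/
open MeasureTheory

/-- The influence χ_i = ∫_0^1 ∫_{[0,1]^n} |v(x_{-i}, b) − v(x)| dx db. -/
noncomputable def chiLin {n : ℕ} (w : Fin n → ℝ) (q : ℝ) (i : Fin n) : ℝ :=
  ∫ b in Set.Icc (0 : ℝ) 1,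
    ∫ x in unitCube n, |linClass w q (Function.update x i b) - linClass w q x|

/-- APiv_i(b): points of the cube that are winning but become losing when
coordinate i is set to b. -/
noncomputable def apivSet {n : ℕ} (w : Fin n → ℝ) (q : ℝ) (i : Fin n) (b : ℝ) :
    Set (Fin n → ℝ) :=
  {x | x ∈ unitCube n ∧ linClass w q x = 1 ∧
    linClass w q (Function.update x i b) = 0}

/-- Piv_i ⊆ [0,1]^{n+1}: pairs (x, b) with x ∈ Piv_i(b). -/
noncomputable def piv {n : ℕ} (w : Fin n → ℝ) (q : ℝ) (i : Fin n) :
    Set ((Fin n → ℝ) × ℝ) :=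
  {p | p.2 ∈ Set.Icc (0 : ℝ) 1 ∧ p.1 ∈ pivSet w q i p.2}

/-- APiv_i ⊆ [0,1]^{n+1}: pairs (x, b) with x ∈ APiv_i(b). -/
noncomputable def apiv {n : ℕ} (w : Fin n → ℝ) (q : ℝ) (i : Fin n) :
    Set ((Fin n → ℝ) × ℝ) :=
  {p | p.2 ∈ Set.Icc (0 : ℝ) 1 ∧ p.1 ∈ apivSet w q i p.2}

section Aux

lemma measurable_linClass {n : ℕ} (w : Fin n → ℝ) (q : ℝ) : Measurable (linClass w q) := by
  unfold linClass
  exact Measurable.ite (measurableSet_le measurable_const (by fun_prop))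
    measurable_const measurable_const

lemma linClass_cases {n : ℕ} (w : Fin n → ℝ) (q : ℝ) (x : Fin n → ℝ) :
    linClass w q x = 0 ∨ linClass w q x = 1 := by
  unfold linClass; split_ifs <;> simp

lemma measurable_updFun {n : ℕ} (i : Fin n) :
    Measurable (fun p : (Fin n → ℝ) × ℝ => Function.update p.1 i p.2) := by
  apply measurable_pi_lambda
  intro j
  by_cases h : j = i
  · subst h; simp only [Function.update_self]; exact measurable_snd
  · simp only [Function.update_of_ne h]
    exact (measurable_pi_apply j).comp measurable_fst

lemma measurableSet_unitCube {n : ℕ} : MeasurableSet (unitCube n) :=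
  MeasurableSet.univ_pi fun _ => measurableSet_Icc

lemma volume_unitCube {n : ℕ} : volume (unitCube n) = 1 := by
  rw [unitCube, volume_pi_pi]; simp [Real.volume_Icc]

variable {n : ℕ} (w : Fin n → ℝ) (q : ℝ) (i : Fin n)

lemma measurableSet_pivSet (b : ℝ) : MeasurableSet (pivSet w q i b) := by
  have hu : Measurable fun x : Fin n → ℝ => Function.update x i b :=
    (measurable_updFun i).comp (measurable_id.prodMk measurable_const)
  have h : pivSet w q i b = unitCube n ∩ ((linClass w q ⁻¹' {0}) ∩
      ((fun x : Fin n → ℝ => linClass w q (Function.update x i b)) ⁻¹' {1})) := rfl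
  rw [h]
  exact measurableSet_unitCube.inter
    (((measurable_linClass w q) (measurableSet_singleton 0)).inter
      (((measurable_linClass w q).comp hu) (measurableSet_singleton 1)))

lemma measurableSet_apivSet (b : ℝ) : MeasurableSet (apivSet w q i b) := by
  have hu : Measurable fun x : Fin n → ℝ => Function.update x i b :=
    (measurable_updFun i).comp (measurable_id.prodMk measurable_const)
  have h : apivSet w q i b = unitCube n ∩ ((linClass w q ⁻¹' {1}) ∩
      ((fun x : Fin n → ℝ => linClass w q (Function.update x i b)) ⁻¹' {0})) := rfl
  rw [h]
  exact measurableSet_unitCube.inter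
    (((measurable_linClass w q) (measurableSet_singleton 1)).inter
      (((measurable_linClass w q).comp hu) (measurableSet_singleton 0)))

lemma measurableSet_piv : MeasurableSet (piv w q i) := by
  have h : piv w q i = (Prod.snd ⁻¹' Set.Icc (0:ℝ) 1) ∩
      ((Prod.fst ⁻¹' unitCube n) ∩
        (((fun p : (Fin n → ℝ) × ℝ => linClass w q p.1) ⁻¹' {0}) ∩
          ((fun p : (Fin n → ℝ) × ℝ => linClass w q (Function.update p.1 i p.2)) ⁻¹' {1}))) := rfl
  rw [h]
  exact (measurable_snd measurableSet_Icc).inter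
    ((measurable_fst measurableSet_unitCube).inter
      ((((measurable_linClass w q).comp measurable_fst) (measurableSet_singleton 0)).inter
        (((measurable_linClass w q).comp (measurable_updFun i)) (measurableSet_singleton 1))))

lemma measurableSet_apiv : MeasurableSet (apiv w q i) := by
  have h : apiv w q i = (Prod.snd ⁻¹' Set.Icc (0:ℝ) 1) ∩
      ((Prod.fst ⁻¹' unitCube n) ∩
        (((fun p : (Fin n → ℝ) × ℝ => linClass w q p.1) ⁻¹' {1}) ∩
          ((fun p : (Fin n → ℝ) × ℝ => linClass w q (Function.update p.1 i p.2)) ⁻¹' {0}))) := rfl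
  rw [h]
  exact (measurable_snd measurableSet_Icc).inter
    ((measurable_fst measurableSet_unitCube).inter
      ((((measurable_linClass w q).comp measurable_fst) (measurableSet_singleton 1)).inter
        (((measurable_linClass w q).comp (measurable_updFun i)) (measurableSet_singleton 0))))

lemma pivSet_subset (b : ℝ) : pivSet w q i b ⊆ unitCube n := fun _ hx => hx.1
lemma apivSet_subset (b : ℝ) : apivSet w q i b ⊆ unitCube n := fun _ hx => hx.1

lemma vol_pivSet_le (b : ℝ) : volume (pivSet w q i b) ≤ 1 :=
  le_trans (measure_mono (pivSet_subset w q i b)) (le_of_eq volume_unitCube)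
lemma vol_apivSet_le (b : ℝ) : volume (apivSet w q i b) ≤ 1 :=
  le_trans (measure_mono (apivSet_subset w q i b)) (le_of_eq volume_unitCube)

lemma slice_piv (b : ℝ) : ((fun x : Fin n → ℝ => (x, b)) ⁻¹' piv w q i) =
    if b ∈ Set.Icc (0:ℝ) 1 then pivSet w q i b else ∅ := by
  ext x
  simp only [Set.mem_preimage, piv, Set.mem_setOf_eq]
  split_ifs with hb
  · exact ⟨fun h => h.2, fun h => ⟨hb, h⟩⟩
  · simp only [Set.mem_empty_iff_false, iff_false]
    exact fun h => hb h.1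

lemma slice_apiv (b : ℝ) : ((fun x : Fin n → ℝ => (x, b)) ⁻¹' apiv w q i) =
    if b ∈ Set.Icc (0:ℝ) 1 then apivSet w q i b else ∅ := by
  ext x
  simp only [Set.mem_preimage, apiv, Set.mem_setOf_eq]
  split_ifs with hb
  · exact ⟨fun h => h.2, fun h => ⟨hb, h⟩⟩
  · simp only [Set.mem_empty_iff_false, iff_false]
    exact fun h => hb h.1

lemma vol_piv_eq : volume (piv w q i) =
    ∫⁻ b in Set.Icc (0:ℝ) 1, volume (pivSet w q i b) := by
  rw [show (volume : Measure ((Fin n → ℝ) × ℝ)) = (volume.prod volume) from rfl,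
    Measure.prod_apply_symm (measurableSet_piv w q i)]
  have h : ∀ b : ℝ, volume ((fun x : Fin n → ℝ => (x, b)) ⁻¹' piv w q i) =
      (Set.Icc (0:ℝ) 1).indicator (fun b => volume (pivSet w q i b)) b := by
    intro b
    rw [slice_piv, Set.indicator_apply]
    split_ifs <;> simp
  rw [lintegral_congr h, lintegral_indicator measurableSet_Icc]

lemma vol_apiv_eq : volume (apiv w q i) =
    ∫⁻ b in Set.Icc (0:ℝ) 1, volume (apivSet w q i b) := by
  rw [show (volume : Measure ((Fin n → ℝ) × ℝ)) = (volume.prod volume) from rfl,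
    Measure.prod_apply_symm (measurableSet_apiv w q i)]
  have h : ∀ b : ℝ, volume ((fun x : Fin n → ℝ => (x, b)) ⁻¹' apiv w q i) =
      (Set.Icc (0:ℝ) 1).indicator (fun b => volume (apivSet w q i b)) b := by
    intro b
    rw [slice_apiv, Set.indicator_apply]
    split_ifs <;> simp
  rw [lintegral_congr h, lintegral_indicator measurableSet_Icc]

lemma inner_integral (b : ℝ) :
    ∫ x in unitCube n, |linClass w q (Function.update x i b) - linClass w q x| =
    (volume (pivSet w q i b)).toReal + (volume (apivSet w q i b)).toReal := by
  have hupd : Measurable fun x : Fin n → ℝ => Function.update x i b :=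
    (measurable_updFun i).comp (measurable_id.prodMk measurable_const)
  set D : Set (Fin n → ℝ) :=
    {x | ¬ linClass w q (Function.update x i b) = linClass w q x} with hD_def
  have hD : MeasurableSet D :=
    (measurableSet_eq_fun ((measurable_linClass w q).comp hupd) (measurable_linClass w q)).compl
  have hfun : (fun x => |linClass w q (Function.update x i b) - linClass w q x|) =
      D.indicator (fun _ => (1:ℝ)) := by
    funext x
    rw [Set.indicator_apply]
    rcases linClass_cases w q (Function.update x i b) with h1 | h1 <;>
      rcases linClass_cases w q x with h2 | h2 <;>
      simp [hD_def, h1, h2]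
  have hsplit : D ∩ unitCube n = pivSet w q i b ∪ apivSet w q i b := by
    ext x
    simp only [Set.mem_inter_iff, Set.mem_union, pivSet, apivSet, Set.mem_setOf_eq, hD_def]
    constructor
    · rintro ⟨hne, hc⟩
      rcases linClass_cases w q x with h2 | h2
      · rcases linClass_cases w q (Function.update x i b) with h1 | h1
        · exact absurd (h1.trans h2.symm) hne
        · exact Or.inl ⟨hc, h2, h1⟩
      · rcases linClass_cases w q (Function.update x i b) with h1 | h1
        · exact Or.inr ⟨hc, h2, h1⟩
        · exact absurd (h1.trans h2.symm) hne
    · rintro (⟨hc, h2, h1⟩ | ⟨hc, h2, h1⟩) <;>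
        exact ⟨by rw [h1, h2]; norm_num, hc⟩
  have hdisj : Disjoint (pivSet w q i b) (apivSet w q i b) := by
    rw [Set.disjoint_left]
    rintro x ⟨_, h0, _⟩ ⟨_, h1, _⟩
    rw [h0] at h1; norm_num at h1
  rw [hfun, integral_indicator hD, setIntegral_const, measureReal_def, Measure.restrict_apply hD, hsplit,
    measure_union hdisj (measurableSet_apivSet w q i b),
    ENNReal.toReal_add (lt_of_le_of_lt (vol_pivSet_le w q i b) (by norm_num)).ne
      (lt_of_le_of_lt (vol_apivSet_le w q i b) (by norm_num)).ne]
  simp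

lemma cube_update_iff (x : Fin n → ℝ) (b : ℝ) :
    (Function.update x i b ∈ unitCube n ∧ x i ∈ Set.Icc (0:ℝ) 1) ↔
    (x ∈ unitCube n ∧ b ∈ Set.Icc (0:ℝ) 1) := by
  simp only [unitCube, Set.mem_univ_pi]
  constructor
  · rintro ⟨h1, h2⟩
    refine ⟨fun j => ?_, by simpa using h1 i⟩
    by_cases h : j = i
    · subst h; exact h2
    · simpa [Function.update_of_ne h] using h1 j
  · rintro ⟨h1, h2⟩
    refine ⟨fun j => ?_, h1 i⟩
    by_cases h : j = i
    · subst h; simpa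
    · simpa [Function.update_of_ne h] using h1 j

lemma T_preimage :
    (fun p : (Fin n → ℝ) × ℝ => (Function.update p.1 i p.2, p.1 i)) ⁻¹' apiv w q i =
      piv w q i := by
  ext ⟨x, b⟩
  simp only [Set.mem_preimage, apiv, piv, pivSet, apivSet, Set.mem_setOf_eq]
  rw [Function.update_idem, Function.update_eq_self]
  constructor
  · rintro ⟨h1, h2, h3, h4⟩
    have h := (cube_update_iff i x b).mp ⟨h2, h1⟩
    exact ⟨h.2, h.1, h4, h3⟩
  · rintro ⟨h1, h2, h3, h4⟩
    have h := (cube_update_iff i x b).mpr ⟨h2, h1⟩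
    exact ⟨h.2, h.1, h4, h3⟩

lemma mp_T {m : ℕ} (i : Fin (m+1)) :
    MeasurePreserving (fun p : (Fin (m+1) → ℝ) × ℝ => (Function.update p.1 i p.2, p.1 i))
      volume volume := by
  set e := MeasurableEquiv.piFinSuccAbove (fun _ : Fin (m+1) => ℝ) i with he_def
  have he : MeasurePreserving e := volume_preserving_piFinSuccAbove _ i
  have hΨ : MeasurePreserving (Prod.map e (id : ℝ → ℝ)) volume volume :=
    he.prod (MeasurePreserving.id _)
  have hΨ' : MeasurePreserving (Prod.map e.symm (id : ℝ → ℝ)) volume volume :=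
    (MeasurePreserving.symm e he).prod (MeasurePreserving.id _)
  have hsw : MeasurePreserving
      (Prod.swap : ((ℝ × (Fin m → ℝ)) × ℝ) → ℝ × (ℝ × (Fin m → ℝ))) volume volume :=
    Measure.measurePreserving_swap
  have hsw2 : MeasurePreserving
      (Prod.map (id : ℝ → ℝ) (Prod.swap : ℝ × (Fin m → ℝ) → (Fin m → ℝ) × ℝ)) volume volume :=
    (MeasurePreserving.id _).prod Measure.measurePreserving_swap
  have hassoc : MeasurePreserving
      (MeasurableEquiv.prodAssoc.symm : ℝ × ((Fin m → ℝ) × ℝ) → (ℝ × (Fin m → ℝ)) × ℝ)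
      volume volume :=
    MeasurePreserving.symm _ volume_preserving_prodAssoc
  have hT : (fun p : (Fin (m+1) → ℝ) × ℝ => (Function.update p.1 i p.2, p.1 i)) =
      (Prod.map e.symm id) ∘ (MeasurableEquiv.prodAssoc.symm : ℝ × ((Fin m → ℝ) × ℝ) → _)
        ∘ (Prod.map id Prod.swap) ∘ Prod.swap ∘ (Prod.map e id) := by
    funext p
    simp [e, MeasurableEquiv.piFinSuccAbove, MeasurableEquiv.prodAssoc, Prod.map,
      Fin.insertNthEquiv, Fin.removeNth]
  rw [hT]
  exact hΨ'.comp (hassoc.comp (hsw2.comp (hsw.comp hΨ)))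

end Aux

/-- Vol(Piv_i) = Vol(APiv_i) and χ_i = 2 · Vol(Piv_i). -/
theorem chiLin_eq_two_vol_piv
    {n : ℕ} (hn : 1 ≤ n) (w : Fin n → ℝ) (q : ℝ) (hw : ∀ k, w k ≠ 0)
    (i : Fin n) :
    volume (piv w q i) = volume (apiv w q i) ∧
    chiLin w q i = 2 * (volume (piv w q i)).toReal := by
  obtain ⟨m, rfl⟩ : ∃ m, n = m + 1 := ⟨n - 1, by omega⟩
  have h1 : volume (piv w q i) = volume (apiv w q i) := by
    rw [← T_preimage w q i, (mp_T i).measure_preimage (measurableSet_apiv w q i).nullMeasurableSet]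
  refine ⟨h1, ?_⟩
  have hIccFin : IsFiniteMeasure (volume.restrict (Set.Icc (0:ℝ) 1)) := by
    constructor
    rw [Measure.restrict_apply_univ, Real.volume_Icc]
    norm_num
  have hchi : chiLin w q i = ∫ b in Set.Icc (0:ℝ) 1,
      ((volume (pivSet w q i b)).toReal + (volume (apivSet w q i b)).toReal) := by
    unfold chiLin
    exact integral_congr_ae (Filter.Eventually.of_forall fun b => inner_integral w q i b)
  -- integrability of each piece
  have key : ∀ (S : Set ((Fin (m+1) → ℝ) × ℝ)) (Sb : ℝ → Set (Fin (m+1) → ℝ)),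
      MeasurableSet S →
      (∀ b, (fun x : Fin (m+1) → ℝ => (x, b)) ⁻¹' S =
        if b ∈ Set.Icc (0:ℝ) 1 then Sb b else ∅) →
      (∀ b, volume (Sb b) ≤ 1) →
      (Integrable (fun b => (volume (Sb b)).toReal) (volume.restrict (Set.Icc (0:ℝ) 1)) ∧
       ∫ b in Set.Icc (0:ℝ) 1, (volume (Sb b)).toReal =
         (∫⁻ b in Set.Icc (0:ℝ) 1, volume (Sb b)).toReal) := by
    intro S Sb hS hslice hle
    set G : ℝ → ENNReal := fun b => volume ((fun x : Fin (m+1) → ℝ => (x, b)) ⁻¹' S) with hG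
    have hGmeas : Measurable G := measurable_measure_prodMk_right hS
    have hGle : ∀ b, G b ≤ 1 := by
      intro b
      rw [hG]
      simp only
      rw [hslice b]
      split_ifs with hb
      · exact hle b
      · simp
    have haeeq : (fun b => (volume (Sb b)).toReal) =ᵐ[volume.restrict (Set.Icc (0:ℝ) 1)]
        (fun b => (G b).toReal) := by
      refine (ae_restrict_iff' measurableSet_Icc).2 (Filter.Eventually.of_forall fun b hb => ?_)
      rw [hG]
      simp only
      rw [hslice b, if_pos hb]
    have hGint : Integrable (fun b => (G b).toReal) (volume.restrict (Set.Icc (0:ℝ) 1)) := by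
      refine ⟨(hGmeas.ennreal_toReal).aestronglyMeasurable, ?_⟩
      apply HasFiniteIntegral.of_bounded (C := 1)
      refine Filter.Eventually.of_forall fun b => ?_
      rw [Real.norm_eq_abs, abs_of_nonneg ENNReal.toReal_nonneg]
      calc (G b).toReal ≤ (1 : ENNReal).toReal :=
        ENNReal.toReal_mono (by norm_num) (hGle b)
      _ = 1 := by simp
    have haeeq2 : (fun b => volume (Sb b)) =ᵐ[volume.restrict (Set.Icc (0:ℝ) 1)] G := by
      refine (ae_restrict_iff' measurableSet_Icc).2 (Filter.Eventually.of_forall fun b hb => ?_)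
      rw [hG]
      simp only
      rw [hslice b, if_pos hb]
    constructor
    · exact hGint.congr haeeq.symm
    · rw [integral_congr_ae haeeq, lintegral_congr_ae haeeq2,
        integral_toReal hGmeas.aemeasurable
          (Filter.Eventually.of_forall fun b => lt_of_le_of_lt (hGle b) (by norm_num))]
  obtain ⟨hint1, heq1⟩ := key (piv w q i) (pivSet w q i) (measurableSet_piv w q i)
    (slice_piv w q i) (vol_pivSet_le w q i)
  obtain ⟨hint2, heq2⟩ := key (apiv w q i) (apivSet w q i) (measurableSet_apiv w q i)
    (slice_apiv w q i) (vol_apivSet_le w q i)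
  rw [hchi, integral_add hint1 hint2, heq1, heq2, ← vol_piv_eq, ← vol_apiv_eq, ← h1]
  ring
end
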